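/- Let P : ℝᵖ → ℝ be convex and continuously differentiable, ε > 0, and let θ̂ ∈ ℝᵖ satisfy 0 ≤ P(θ̂) ≤ ε and ∇P(θ̂) ≠ 0. Let θ* ∈ ℝᵖ satisfy P(θ*) ≤ 0. Then for every m ∈ ℝᵖ, ⟨θ* − θ̂, proj(m) − m⟩ ≥ 0; equivalently ⟨θ* − θ̂, proj(m)⟩ ≥ ⟨θ* − θ̂, m⟩. -/

import Mathlib

open scoped RealInnerProductSpace

noncomputable def projOp {p : ℕ} (gradP : EuclideanSpace ℝ (Fin p)) (h : ℝ)
    (m : EuclideanSpace ℝ (Fin p)) : EuclideanSpace ℝ (Fin p) :=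
  if ⟪gradP, m⟫ ≤ 0 then m
  else m - (h * (⟪gradP, m⟫ / ‖gradP‖^2)) • gradP

theorem proj_estimation_error_property
    (p : ℕ) (P : EuclideanSpace ℝ (Fin p) → ℝ)
    (hP : ContDiff ℝ 1 P) (hP_conv : ConvexOn ℝ Set.univ P)
    (ε : ℝ) (hε : 0 < ε)
    (θhat : EuclideanSpace ℝ (Fin p))
    (hθhat₀ : 0 ≤ P θhat) (hθhatε : P θhat ≤ ε)
    (hgrad : gradient P θhat ≠ 0)
    (θstar : EuclideanSpace ℝ (Fin p)) (hθstar : P θstar ≤ 0)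
    (m : EuclideanSpace ℝ (Fin p)) :
    ⟪θstar - θhat, projOp (gradient P θhat) (min 1 (P θhat / ε)) m - m⟫ ≥ 0 := by
  set g := gradient P θhat with hg
  set v := θstar - θhat with hv
  have hdiff : DifferentiableAt ℝ P θhat := (hP.differentiable one_ne_zero) θhat
  have hgradAt : HasGradientAt P g θhat := hdiff.hasGradientAt
  -- derivative of the 1-D restriction
  have hline : HasDerivAt (fun t : ℝ => P (θhat + t • v)) ⟪g, v⟫ 0 := by
    have hL : HasDerivAt (fun t : ℝ => θhat + t • v) v 0 := by
      simpa using ((hasDerivAt_id (0:ℝ)).smul_const v).const_add θhat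
    have hF : HasFDerivAt P ((InnerProductSpace.toDual ℝ (EuclideanSpace ℝ (Fin p))) g)
        ((fun t : ℝ => θhat + t • v) 0) := by simpa using hgradAt.hasFDerivAt
    have hc := hF.comp_hasDerivAt 0 hL
    simp at hc
    exact hc
  -- slope bound from convexity
  have hslope : ∀ t : ℝ, t ∈ Set.Ioc (0:ℝ) 1 →
      (P (θhat + t • v) - P θhat) / t ≤ P θstar - P θhat := by
    intro t ht
    have key : P (θhat + t • v) ≤ (1 - t) * P θhat + t * P θstar := by
      have := hP_conv.2 (Set.mem_univ θhat) (Set.mem_univ θstar)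
        (by linarith [ht.2] : (0:ℝ) ≤ 1 - t) (le_of_lt ht.1) (by ring)
      have heq : (1 - t) • θhat + t • θstar = θhat + t • v := by
        simp only [hv, smul_sub]; module
      simpa [heq] using this
    rw [div_le_iff₀ ht.1]
    nlinarith [ht.1]
  have hkey : ⟪g, v⟫ ≤ P θstar - P θhat := by
    have htend : Filter.Tendsto (fun t : ℝ => (P (θhat + t • v) - P θhat) / t)
        (nhdsWithin 0 (Set.Ioi 0)) (nhds ⟪g, v⟫) := by
      have := hline.tendsto_slope_zero_right
      simpa [slope_def_field, div_eq_inv_mul] using this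
    refine le_of_tendsto htend ?_
    filter_upwards [Ioc_mem_nhdsGT_of_mem (by simp : (0:ℝ) ∈ Set.Ico 0 1)] with t ht
    exact hslope t ht
  have hgv : ⟪g, v⟫ ≤ 0 := by linarith
  -- now unfold projOp
  rw [projOp]
  by_cases hc : ⟪g, m⟫ ≤ 0
  · rw [if_pos hc]
    simp
  · rw [if_neg hc]
    push_neg at hc
    have hh : 0 ≤ min 1 (P θhat / ε) := le_min zero_le_one (div_nonneg hθhat₀ hε.le)
    have hng : 0 < ‖g‖^2 := by
      have : 0 < ‖g‖ := norm_pos_iff.mpr hgrad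
      positivity
    have hcoef : 0 ≤ min 1 (P θhat / ε) * (⟪g, m⟫ / ‖g‖^2) :=
      mul_nonneg hh (div_nonneg hc.le hng.le)
    have hvg : ⟪v, g⟫ ≤ 0 := by rwa [real_inner_comm]
    have heq : ⟪v, m - (min 1 (P θhat / ε) * (⟪g, m⟫ / ‖g‖^2)) • g - m⟫
        = -(min 1 (P θhat / ε) * (⟪g, m⟫ / ‖g‖^2)) * ⟪v, g⟫ := by
      rw [sub_sub_cancel_left, inner_neg_right, real_inner_smul_right]
      ring
    rw [ge_iff_le, heq]
    nlinarith [hcoef, hvg]
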